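/- Fix ψ ∈ ℂ and define 2×2 matrices S₀ = I, and for k ≥ 1: S_{2k} = [[1/(k!)², 0],[0, (ψ + 1/k - 2H_k)/(k!(k-1)!)]], S_{2k+1} = [[0, (ψ - 2H_k)/(k!)²],[1/((k+1)!k!), 0]] (with S₁ = [[0,ψ],[1,0]]). Let μ = diag(1/2,-1/2), 𝒰 = [[0,2],[2,0]], R = [[0,2],[0,0]]. Then for all k ≥ 1: k·S_k + S_k μ - μ S_k = 𝒰 S_{k-1} - S_{k-1} R. -/

import Mathlib

open Matrix

/-- Harmonic number `H_n = ∑_{k=1}^n 1/k` as a complex number. -/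
noncomputable def harmC (n : ℕ) : ℂ := ∑ i ∈ Finset.range n, (1 : ℂ) / (i + 1)

/-- The `S`-matrix of the Catalan Frobenius manifold at the special point
`(t¹,t²) = (0,1)`: `S₀ = I`,
`S_{2k} = [[1/(k!)², 0],[0,(ψ + 1/k - 2H_k)/(k!(k-1)!)]]` for `k ≥ 1`,
`S_{2k+1} = [[0,(ψ - 2H_k)/(k!)²],[1/((k+1)!k!),0]]`. -/
noncomputable def Scat (ψ : ℂ) (n : ℕ) : Matrix (Fin 2) (Fin 2) ℂ :=
  if n = 0 then 1
  else if n % 2 = 0 then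
    let k := n / 2
    !![1 / ((Nat.factorial k : ℂ))^2, 0;
       0, (ψ + 1/(k : ℂ) - 2 * harmC k) / ((Nat.factorial k : ℂ) * (Nat.factorial (k-1) : ℂ))]
  else
    let k := n / 2
    !![0, (ψ - 2 * harmC k) / ((Nat.factorial k : ℂ))^2;
       1 / ((Nat.factorial (k+1) : ℂ) * (Nat.factorial k : ℂ)), 0]

lemma harmC_succ (m : ℕ) : harmC (m+1) = harmC m + 1/((m:ℂ)+1) := by
  simp [harmC, Finset.sum_range_succ]

lemma Scat_even (ψ : ℂ) (m : ℕ) : Scat ψ (2*m+2) =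
    !![1 / ((Nat.factorial (m+1) : ℂ))^2, 0;
       0, (ψ + 1/((m:ℂ)+1) - 2 * harmC (m+1)) /
          ((Nat.factorial (m+1) : ℂ) * (Nat.factorial m : ℂ))] := by
  have h1 : (2*m+2) % 2 = 0 := by omega
  have h2 : (2*m+2) / 2 = m + 1 := by omega
  simp [Scat, h1, h2]

lemma Scat_odd (ψ : ℂ) (m : ℕ) : Scat ψ (2*m+1) =
    !![0, (ψ - 2 * harmC m) / ((Nat.factorial m : ℂ))^2;
       1 / ((Nat.factorial (m+1) : ℂ) * (Nat.factorial m : ℂ)), 0] := by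
  have h1 : (2*m+1) % 2 = 1 := by omega
  have h2 : (2*m+1) / 2 = m := by omega
  simp [Scat, h1, h2]

lemma auxA (x a : ℂ) (ha : a ≠ 0) (hx : x+1 ≠ 0) :
    (2*x+2) * (1/((x+1)*a)^2) = 2 * (1/(((x+1)*a)*a)) := by
  field_simp

lemma auxB (x a ψ h : ℂ) (ha : a ≠ 0) (hx : x+1 ≠ 0) :
    (2*x+2) * ((ψ + 1/(x+1) - 2*(h + 1/(x+1)))/(((x+1)*a)*a))
      = 2*(ψ - 2*h)/a^2 - 2/(((x+1)*a)*a) := by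
  field_simp; ring

lemma auxC (x a ψ h : ℂ) (ha : a ≠ 0) (hx : x+1 ≠ 0) :
    (2*x+2) * ((ψ - 2*(h+1/(x+1)))/((x+1)*a)^2)
      = 2*(ψ + 1/(x+1) - 2*(h+1/(x+1)))/(((x+1)*a)*a) - 2/((x+1)*a)^2 := by
  have h1 : ((x+1)*a) ≠ 0 := mul_ne_zero hx ha
  have h2 : ((x+1)*a)^2 ≠ 0 := pow_ne_zero _ h1
  have h3 : ((x+1)*a)*a ≠ 0 := mul_ne_zero h1 ha
  rw [div_sub_div _ _ h3 h2, mul_comm (2*x+2), div_mul_eq_mul_div,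
    div_eq_div_iff h2 (mul_ne_zero h3 h2)]
  field_simp
  ring

lemma auxD (x a : ℂ) (ha : a ≠ 0) (hx : x+1 ≠ 0) (hx2 : x+2 ≠ 0) :
    (2*x+4) * (1/(((x+2)*((x+1)*a))*((x+1)*a))) = 2 * (1/((x+1)*a)^2) := by
  field_simp; ring

lemma key (c a00 a01 a10 a11 b00 b01 b10 b11 : ℂ)
    (h00 : c * a00 = 2 * b10)
    (h01 : c * a01 - a01 = 2 * b11 - 2 * b00)
    (h10 : c * a10 + a10 = 2 * b00)
    (h11 : c * a11 = 2 * b01 - 2 * b10) :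
    c • !![a00, a01; a10, a11] + !![a00, a01; a10, a11] * !![(1:ℂ)/2, 0; 0, -1/2]
      - !![(1:ℂ)/2, 0; 0, -1/2] * !![a00, a01; a10, a11]
      = !![(0:ℂ), 2; 2, 0] * !![b00, b01; b10, b11]
        - !![b00, b01; b10, b11] * !![(0:ℂ), 2; 0, 0] := by
  ext i j
  fin_cases i <;> fin_cases j <;>
    simp [Matrix.mul_apply, Fin.sum_univ_two, Matrix.vecHead, Matrix.vecTail] <;>
    first
      | linear_combination h00
      | linear_combination h01
      | linear_combination h10
      | linear_combination h11

/-- The explicit matrices `S_k` satisfy the calibration recursion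
`k S_k + S_k μ - μ S_k = 𝒰 S_{k-1} - S_{k-1} R` at the special point. -/
theorem S_matrix_recursion_special_point (ψ : ℂ) :
    let mu : Matrix (Fin 2) (Fin 2) ℂ := !![1/2, 0; 0, -1/2]
    let U : Matrix (Fin 2) (Fin 2) ℂ := !![0, 2; 2, 0]
    let R : Matrix (Fin 2) (Fin 2) ℂ := !![0, 2; 0, 0]
    ∀ k : ℕ, 1 ≤ k →
      (k : ℂ) • Scat ψ k + Scat ψ k * mu - mu * Scat ψ k
        = U * Scat ψ (k-1) - Scat ψ (k-1) * R := by
  intro mu U R k hk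
  obtain ⟨j, rfl⟩ := Nat.exists_eq_add_of_le hk
  rcases Nat.even_or_odd j with ⟨m, rfl⟩ | ⟨m, rfl⟩
  · -- k = 1 + 2m, odd
    rcases m with _ | m
    · -- k = 1
      have h0 : Scat ψ 0 = 1 := by simp [Scat]
      rw [show (1 + (0+0) : ℕ) = 2*0+1 by norm_num, show ((2*0+1 : ℕ) - 1) = 0 by norm_num,
        Scat_odd, h0, Matrix.one_fin_two]
      apply key <;> norm_num [harmC, Nat.factorial]
    · -- k = 2m+3 = 2(m+1)+1, prev = 2m+2
      have e1 : (1 + (m+1 + (m+1)) : ℕ) = 2*(m+1)+1 := by ring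
      have e2 : ((2*(m+1)+1 : ℕ) - 1) = 2*m+2 := by omega
      rw [e1, e2, Scat_odd, Scat_even]
      have hf0 : ((Nat.factorial m : ℂ)) ≠ 0 := Nat.cast_ne_zero.mpr (Nat.factorial_ne_zero _)
      have hfs : ((Nat.factorial (m+1) : ℂ)) = ((m:ℂ)+1) * (Nat.factorial m : ℂ) := by
        push_cast [Nat.factorial_succ]; ring
      have hfs2 : ((Nat.factorial (m+2) : ℂ))
          = ((m:ℂ)+2) * (((m:ℂ)+1) * (Nat.factorial m : ℂ)) := by
        push_cast [Nat.factorial_succ]; ring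
      have hm1 : ((m:ℂ)+1) ≠ 0 := Nat.cast_add_one_ne_zero m
      have hm2 : ((m:ℂ)+2) ≠ 0 := by
        have h := Nat.cast_ne_zero (R := ℂ).mpr (show (m+2 : ℕ) ≠ 0 by omega)
        push_cast at h; exact h
      have hC := auxC (m:ℂ) (Nat.factorial m : ℂ) ψ (harmC m) hf0 hm1
      have hD := auxD (m:ℂ) (Nat.factorial m : ℂ) hf0 hm1 hm2
      apply key
      · push_cast; ring
      · push_cast
        simp only [show (m+1+1 : ℕ) = m+2 from rfl, harmC_succ, hfs2, hfs]
        linear_combination hC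
      · push_cast
        simp only [show (m+1+1 : ℕ) = m+2 from rfl, harmC_succ, hfs2, hfs]
        linear_combination hD
      · push_cast; ring
  · -- k = 1 + (2m+1) = 2m+2, prev = 2m+1
    have e1 : (1 + (2*m+1) : ℕ) = 2*m+2 := by ring
    have e2 : ((2*m+2 : ℕ) - 1) = 2*m+1 := by omega
    rw [e1, e2, Scat_even, Scat_odd]
    have hf0 : ((Nat.factorial m : ℂ)) ≠ 0 := Nat.cast_ne_zero.mpr (Nat.factorial_ne_zero _)
    have hfs : ((Nat.factorial (m+1) : ℂ)) = ((m:ℂ)+1) * (Nat.factorial m : ℂ) := by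
      push_cast [Nat.factorial_succ]; ring
    have hm1 : ((m:ℂ)+1) ≠ 0 := Nat.cast_add_one_ne_zero m
    have hA := auxA (m:ℂ) (Nat.factorial m : ℂ) hf0 hm1
    have hB := auxB (m:ℂ) (Nat.factorial m : ℂ) ψ (harmC m) hf0 hm1
    apply key
    · push_cast
      simp only [hfs]
      linear_combination hA
    · push_cast; ring
    · push_cast; ring
    · push_cast
      simp only [harmC_succ, hfs]
      linear_combination hB
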